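/- Let α ∈ (0,1), γ > 1, and let f : ℝ^N × (0,∞) → ℝ satisfy ‖f(·,t)‖_{L^1(ℝ^N)} ≤ C(1+t)^{−γ} for all t > 0. Define M_f(t) = ∫_{ℝ^N} f(x,t) dx, M(t) = ∫_0^t M_f(s)(t−s)^{α−1} ds, and M_∞ = ∫_0^∞ M_f(s) ds. Then t^{1−α} M(t) → M_∞ as t → ∞. -/

import Mathlib

open MeasureTheory Real Set Filter intervalIntegral

theorem stmt7 (N : ℕ) (hN : 0 < N) (α γ C : ℝ)
    (hα : α ∈ Set.Ioo (0:ℝ) 1) (hγ : 1 < γ) (hC : 0 < C)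
    (f : EuclideanSpace ℝ (Fin N) → ℝ → ℝ)
    (hint : ∀ t > (0:ℝ), Integrable (fun x => f x t))
    (hsize : ∀ t > (0:ℝ), (∫ x, |f x t|) ≤ C * (1 + t) ^ (-γ))
    (hmeas : Measurable fun t : ℝ => ∫ x, f x t) :
    Tendsto (fun t : ℝ => t ^ (1 - α) *
        ∫ s in (0:ℝ)..t, (∫ x, f x s) * (t - s) ^ (α - 1))
      atTop (nhds (∫ s in Set.Ioi (0:ℝ), ∫ x, f x s)) := by
  obtain ⟨hα0, hα1⟩ := hα
  set M : ℝ → ℝ := fun s => ∫ x, f x s with hMdef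
  -- pointwise bound on M
  have hMb : ∀ s : ℝ, 0 < s → |M s| ≤ C * (1 + s) ^ (-γ) := by
    intro s hs
    calc |M s| ≤ ∫ x, |f x s| := by
          simpa [Real.norm_eq_abs] using norm_integral_le_integral_norm (fun x => f x s)
      _ ≤ C * (1 + s) ^ (-γ) := hsize s hs
  -- integrability of the dominating function
  have hgInt : IntegrableOn (fun s : ℝ => (1 + s) ^ (-γ)) (Ioi (0:ℝ)) := by
    have h1 : IntegrableOn (fun s : ℝ => (1 + s) ^ (-γ)) (Ioc (0:ℝ) 1) := by
      refine Integrable.mono' (g := fun _ => (1:ℝ)) (integrableOn_const measure_Ioc_lt_top.ne)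
        (Measurable.aestronglyMeasurable (by fun_prop)) ?_
      filter_upwards [ae_restrict_mem measurableSet_Ioc] with s hs
      rw [Real.norm_eq_abs, abs_of_nonneg (rpow_nonneg (by linarith [hs.1]) _)]
      exact rpow_le_one_of_one_le_of_nonpos (by linarith [hs.1]) (by linarith)
    have h2 : IntegrableOn (fun s : ℝ => (1 + s) ^ (-γ)) (Ioi (1:ℝ)) := by
      refine Integrable.mono' (integrableOn_Ioi_rpow_of_lt (a := -γ) (by linarith) one_pos)
        (Measurable.aestronglyMeasurable (by fun_prop)) ?_
      filter_upwards [ae_restrict_mem measurableSet_Ioi] with s hs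
      have hs1 : (1:ℝ) < s := hs
      rw [Real.norm_eq_abs, abs_of_nonneg (rpow_nonneg (by linarith) _)]
      exact rpow_le_rpow_of_nonpos (by linarith) (by linarith) (by linarith)
    have := h1.union h2
    rwa [Ioc_union_Ioi_eq_Ioi zero_le_one] at this
  have hMint : IntegrableOn M (Ioi (0:ℝ)) := by
    refine Integrable.mono' (hgInt.const_mul C) hmeas.aestronglyMeasurable ?_
    filter_upwards [ae_restrict_mem measurableSet_Ioi] with s hs
    simpa [Real.norm_eq_abs] using hMb s hs
  -- interval integrability of the product on subintervals of (0, t)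
  have hker : ∀ t a b : ℝ, a ≤ b →
      IntegrableOn (fun s : ℝ => (t - s) ^ (α - 1)) (Ioc a b) := by
    intro t a b hab
    have h0 : IntervalIntegrable (fun x : ℝ => x ^ (α - 1)) volume (t - a) (t - b) :=
      intervalIntegral.intervalIntegrable_rpow' (by linarith)
    have := h0.comp_sub_left t
    simp only [sub_sub_cancel] at this
    rwa [intervalIntegrable_iff_integrableOn_Ioc_of_le hab] at this
  have hprod : ∀ t : ℝ, 0 < t → ∀ a b : ℝ, 0 ≤ a → a ≤ b →
      IntervalIntegrable (fun s => M s * (t - s) ^ (α - 1)) volume a b := by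
    intro t ht a b ha hab
    rw [intervalIntegrable_iff_integrableOn_Ioc_of_le hab]
    refine Integrable.bdd_mul (c := C) (hker t a b hab) hmeas.aestronglyMeasurable ?_
    filter_upwards [ae_restrict_mem measurableSet_Ioc] with s hs
    have hs0 : 0 < s := lt_of_le_of_lt ha hs.1
    rw [Real.norm_eq_abs]
    calc |M s| ≤ C * (1 + s) ^ (-γ) := hMb s hs0
      _ ≤ C * 1 := by
          gcongr
          exact rpow_le_one_of_one_le_of_nonpos (by linarith) (by linarith)
      _ = C := mul_one C
  -- kernel identity
  have hkerId : ∀ t : ℝ, 0 < t → ∀ s : ℝ, 0 ≤ s → s < t →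
      t ^ (1 - α) * (t - s) ^ (α - 1) = (t / (t - s)) ^ (1 - α) := by
    intro t ht s hs hst
    have h1 : (0:ℝ) < t - s := by linarith
    rw [div_rpow ht.le h1.le, show α - 1 = -(1 - α) by ring, rpow_neg h1.le, div_eq_mul_inv]
  -- the truncated family
  set F : ℝ → ℝ → ℝ := fun t s =>
    (Ioc (0:ℝ) (t / 2)).indicator (fun s => M s * (t ^ (1 - α) * (t - s) ^ (α - 1))) s with hFdef
  -- dominated convergence for the main part
  have hA : Tendsto (fun t : ℝ => ∫ s in Ioi (0:ℝ), F t s) atTop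
      (nhds (∫ s in Ioi (0:ℝ), M s)) := by
    refine tendsto_integral_filter_of_dominated_convergence
      (bound := fun s => (C * 2 ^ (1 - α)) * (1 + s) ^ (-γ)) ?_ ?_ ?_ ?_
    · filter_upwards with t
      exact ((hmeas.mul (by fun_prop)).indicator measurableSet_Ioc).aestronglyMeasurable
    · filter_upwards [eventually_gt_atTop (0:ℝ)] with t ht
      filter_upwards [ae_restrict_mem measurableSet_Ioi] with s hs
      by_cases hmem : s ∈ Ioc (0:ℝ) (t / 2)
      · rw [hFdef]
        simp only [indicator_of_mem hmem]
        obtain ⟨hs0, hs2⟩ := hmem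
        have h1 : (0:ℝ) < t - s := by linarith
        have hker_nonneg : (0:ℝ) ≤ t ^ (1 - α) * (t - s) ^ (α - 1) :=
          mul_nonneg (rpow_nonneg ht.le _) (rpow_nonneg h1.le _)
        rw [Real.norm_eq_abs, abs_mul, abs_of_nonneg hker_nonneg]
        have hb2 : t ^ (1 - α) * (t - s) ^ (α - 1) ≤ 2 ^ (1 - α) := by
          rw [hkerId t ht s hs0.le (by linarith)]
          refine rpow_le_rpow (div_nonneg ht.le h1.le) ?_ (by linarith)
          rw [div_le_iff₀ h1]; linarith
        calc |M s| * (t ^ (1 - α) * (t - s) ^ (α - 1)) ≤ (C * (1 + s) ^ (-γ)) * 2 ^ (1 - α) :=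
              mul_le_mul (hMb s hs0) hb2 hker_nonneg (by positivity)
          _ = (C * 2 ^ (1 - α)) * (1 + s) ^ (-γ) := by ring
      · rw [hFdef]
        simp only [indicator_of_notMem hmem, norm_zero]
        have hs0 : 0 < s := hs
        positivity
    · exact hgInt.const_mul _
    · filter_upwards [ae_restrict_mem measurableSet_Ioi] with s hs
      have hs0 : 0 < s := hs
      have hE : ∀ᶠ t : ℝ in atTop, M s * (t / (t - s)) ^ (1 - α) = F t s := by
        filter_upwards [eventually_ge_atTop (2 * s), eventually_gt_atTop (0:ℝ)] with t ht2 ht0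
        rw [hFdef]
        simp only [indicator_of_mem (show s ∈ Ioc (0:ℝ) (t/2) from ⟨hs0, by linarith⟩)]
        rw [hkerId t ht0 s hs0.le (by linarith)]
      have hq : Tendsto (fun t : ℝ => t / (t - s)) atTop (nhds 1) := by
        have h0 : Tendsto (fun t : ℝ => 1 - s / t) atTop (nhds 1) := by
          have := (tendsto_const_nhds (x := s) (f := atTop (α := ℝ))).div_atTop tendsto_id
          simpa using tendsto_const_nhds.sub this
        have he : (fun t : ℝ => 1 - s / t) =ᶠ[atTop] fun t => (t - s) / t := by
          filter_upwards [eventually_gt_atTop (0:ℝ)] with t ht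
          rw [sub_div, div_self ht.ne']
        have h1 : Tendsto (fun t : ℝ => (t - s) / t) atTop (nhds 1) := h0.congr' he
        have h2 : Tendsto (fun t : ℝ => ((t - s) / t)⁻¹) atTop (nhds 1) := by
          simpa using h1.inv₀ one_ne_zero
        refine h2.congr (fun t => ?_)
        rw [inv_div]
      have hq2 : Tendsto (fun t : ℝ => (t / (t - s)) ^ (1 - α)) atTop (nhds 1) := by
        have hc := (Real.continuousAt_rpow_const 1 (1 - α) (Or.inl one_ne_zero)).tendsto.comp hq
        simpa [Function.comp_def] using hc
      have := hq2.const_mul (M s)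
      rw [mul_one] at this
      exact this.congr' hE
  -- representation of the main part
  have hArepr : ∀ᶠ t : ℝ in atTop,
      t ^ (1 - α) * ∫ s in (0:ℝ)..(t / 2), M s * (t - s) ^ (α - 1)
        = ∫ s in Ioi (0:ℝ), F t s := by
    filter_upwards [eventually_gt_atTop (0:ℝ)] with t ht
    rw [hFdef]
    rw [MeasureTheory.integral_indicator measurableSet_Ioc, Measure.restrict_restrict measurableSet_Ioc,
      inter_eq_left.mpr Set.Ioc_subset_Ioi_self,
      intervalIntegral.integral_of_le (by positivity : (0:ℝ) ≤ t / 2),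
      ← MeasureTheory.integral_const_mul]
    exact integral_congr_ae (Eventually.of_forall fun s => by ring)
  -- the tail part tends to zero
  have hB : Tendsto (fun t : ℝ => t ^ (1 - α) * ∫ s in (t / 2)..t, M s * (t - s) ^ (α - 1))
      atTop (nhds 0) := by
    refine squeeze_zero_norm' (a := fun t => (C / α * 2 ^ (γ - α)) * t ^ (1 - γ)) ?_ ?_
    · filter_upwards [eventually_gt_atTop (0:ℝ)] with t ht
      have ht2 : (0:ℝ) < t / 2 := by positivity
      have hkint : IntervalIntegrable (fun s : ℝ => C * (1 + t/2) ^ (-γ) * (t - s) ^ (α - 1))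
          volume (t / 2) t := by
        rw [intervalIntegrable_iff_integrableOn_Ioc_of_le (by linarith)]
        exact (hker t (t/2) t (by linarith)).const_mul _
      have hIbnd : ‖∫ s in (t / 2)..t, M s * (t - s) ^ (α - 1)‖
          ≤ |∫ s in (t / 2)..t, C * (1 + t/2) ^ (-γ) * (t - s) ^ (α - 1)| := by
        refine intervalIntegral.norm_integral_le_abs_of_norm_le ?_ hkint
        rw [uIoc_of_le (by linarith : t / 2 ≤ t)]
        filter_upwards [ae_restrict_mem measurableSet_Ioc] with s hs
        rw [Real.norm_eq_abs, abs_mul, abs_of_nonneg (rpow_nonneg (by linarith [hs.2] : (0:ℝ) ≤ t - s) _)]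
        have hs0 : 0 < s := lt_trans ht2 hs.1
        refine mul_le_mul ?_ le_rfl (rpow_nonneg (sub_nonneg.mpr hs.2) _) (by positivity)
        calc |M s| ≤ C * (1 + s) ^ (-γ) := hMb s hs0
          _ ≤ C * (1 + t/2) ^ (-γ) :=
              mul_le_mul_of_nonneg_left (rpow_le_rpow_of_nonpos
                (by linarith : (0:ℝ) < 1 + t/2) (by linarith [hs.1.le] : 1 + t/2 ≤ 1 + s)
                (by linarith : -γ ≤ 0)) hC.le
      have hIval : (∫ s in (t / 2)..t, C * (1 + t/2) ^ (-γ) * (t - s) ^ (α - 1))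
          = C * (1 + t/2) ^ (-γ) * ((t / 2) ^ α / α) := by
        rw [intervalIntegral.integral_const_mul]
        congr 1
        rw [intervalIntegral.integral_comp_sub_left (fun u : ℝ => u ^ (α - 1)) t]
        rw [sub_self, show t - t / 2 = t / 2 by ring,
          integral_rpow (Or.inl (by linarith : (-1:ℝ) < α - 1)), sub_add_cancel,
          Real.zero_rpow hα0.ne', sub_zero]
      rw [Real.norm_eq_abs, abs_mul, abs_of_nonneg (rpow_nonneg ht.le _)]
      calc t ^ (1 - α) * |∫ s in (t / 2)..t, M s * (t - s) ^ (α - 1)|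
          ≤ t ^ (1 - α) * (C * (1 + t/2) ^ (-γ) * ((t / 2) ^ α / α)) := by
            rw [← Real.norm_eq_abs]
            have hval_nonneg : (0:ℝ) ≤ C * (1 + t/2) ^ (-γ) * ((t / 2) ^ α / α) := by positivity
            have : ‖∫ s in (t / 2)..t, M s * (t - s) ^ (α - 1)‖
                ≤ C * (1 + t/2) ^ (-γ) * ((t / 2) ^ α / α) := by
              refine hIbnd.trans (le_of_eq ?_)
              rw [hIval, abs_of_nonneg hval_nonneg]
            gcongr
        _ ≤ t ^ (1 - α) * (C * (t/2) ^ (-γ) * ((t / 2) ^ α / α)) := by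
            have hX : ((1:ℝ) + t/2) ^ (-γ) ≤ (t/2) ^ (-γ) :=
              rpow_le_rpow_of_nonpos ht2 (by linarith) (by linarith)
            exact mul_le_mul_of_nonneg_left (mul_le_mul_of_nonneg_right
              (mul_le_mul_of_nonneg_left hX hC.le) (by positivity)) (rpow_nonneg ht.le _)
        _ = (C / α * 2 ^ (γ - α)) * t ^ (1 - γ) := by
            have e1 : (t/2:ℝ) ^ (-γ) * (t/2) ^ α = (t/2) ^ (α - γ) := by
              rw [← Real.rpow_add ht2]; ring_nf
            have e2 : (t/2:ℝ) ^ (α - γ) = t ^ (α - γ) * 2 ^ (γ - α) := by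
              rw [div_rpow ht.le (by norm_num : (0:ℝ) ≤ 2), div_eq_mul_inv,
                ← Real.rpow_neg (by norm_num : (0:ℝ) ≤ 2), neg_sub]
            have e3 : t ^ (1 - α) * t ^ (α - γ) = t ^ (1 - γ) := by
              rw [← Real.rpow_add ht]; ring_nf
            calc t ^ (1 - α) * (C * (t/2) ^ (-γ) * ((t / 2) ^ α / α))
                = (C / α) * (t ^ (1 - α) * ((t/2) ^ (-γ) * (t/2) ^ α)) := by ring
              _ = (C / α) * (t ^ (1 - α) * (t ^ (α - γ) * 2 ^ (γ - α))) := by rw [e1, e2]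
              _ = (C / α) * ((t ^ (1 - α) * t ^ (α - γ)) * 2 ^ (γ - α)) := by ring
              _ = (C / α * 2 ^ (γ - α)) * t ^ (1 - γ) := by rw [e3]; ring
    · have h0 : Tendsto (fun t : ℝ => t ^ (-(γ - 1))) atTop (nhds 0) :=
        tendsto_rpow_neg_atTop (by linarith)
      have h1 : Tendsto (fun t : ℝ => t ^ (1 - γ)) atTop (nhds 0) := by
        refine h0.congr (fun t => ?_); norm_num
      have := h1.const_mul (C / α * 2 ^ (γ - α))
      simpa using this
  -- assemble
  have hsplit : (fun t : ℝ => (∫ s in Ioi (0:ℝ), F t s)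
        + t ^ (1 - α) * ∫ s in (t / 2)..t, M s * (t - s) ^ (α - 1))
      =ᶠ[atTop] fun t : ℝ => t ^ (1 - α) * ∫ s in (0:ℝ)..t, M s * (t - s) ^ (α - 1) := by
    filter_upwards [eventually_gt_atTop (0:ℝ), hArepr] with t ht hAr
    rw [← hAr, ← mul_add,
      intervalIntegral.integral_add_adjacent_intervals
        (hprod t ht 0 (t/2) le_rfl (by linarith))
        (hprod t ht (t/2) t (by linarith) (by linarith))]
  have hfin := hA.add hB
  rw [add_zero] at hfin
  exact hfin.congr' hsplit
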